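/- In the group G_k = ⟨g, h ∣ (h⁻¹g)^k⟩ with k ≥ 2, for each 1 ≤ ℓ ≤ k let E_ℓ be the subset of the Cayley graph obtained by cutting along the edges (g⁻¹, 1) and (g⁻¹(hg⁻¹)^{ℓ−1}, (hg⁻¹)^ℓ). Then hE_ℓ = E_ℓ \ {b_ℓ} with b_ℓ = (hg⁻¹)^ℓ, and b_ℓ = 1 if and only if ℓ = k. -/

import Mathlib

def sierpRels (k : ℕ) : Set (FreeGroup Bool) :=
  {((FreeGroup.of false)⁻¹ * FreeGroup.of true) ^ k}

/-- The group G_k = ⟨g, h ∣ (h⁻¹g)^k⟩. -/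
abbrev Gk (k : ℕ) := PresentedGroup (sierpRels k)

namespace GkAux

abbrev Letter (k : ℕ) := ℤ ⊕ ZMod k

def Ok {k : ℕ} : Letter k → Prop
  | .inl n => n ≠ 0
  | .inr m => m ≠ 0

def Alt {k : ℕ} (a b : Letter k) : Prop := a.isLeft ≠ b.isLeft

def Red {k : ℕ} (l : List (Letter k)) : Prop :=
  l.Chain' Alt ∧ ∀ a ∈ l, Ok a

def W (k : ℕ) := {l : List (Letter k) // Red l}

theorem red_nil {k : ℕ} : Red ([] : List (Letter k)) := ⟨List.isChain_nil, by simp⟩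

def tcons {k : ℕ} (n : ℤ) (l : List (Letter k)) : List (Letter k) :=
  match l with
  | .inl n' :: r => if n + n' = 0 then r else .inl (n + n') :: r
  | l => if n = 0 then l else .inl n :: l

def scons {k : ℕ} (m : ZMod k) (l : List (Letter k)) : List (Letter k) :=
  match l with
  | .inr m' :: r => if m + m' = 0 then r else .inr (m + m') :: r
  | l => if m = 0 then l else .inr m :: l

theorem red_tcons {k : ℕ} {l : List (Letter k)} (h : Red l) (n : ℤ) : Red (tcons n l) := by
  rcases l with _ | ⟨a, r⟩
  · simp only [tcons]
    split
    · exact red_nil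
    · exact ⟨List.isChain_singleton _, by simpa [Ok] using ‹n ≠ 0›⟩
  · rcases a with n' | m'
    · simp only [tcons]
      split
      · exact ⟨h.1.tail, fun a ha => h.2 a (List.mem_cons_of_mem _ ha)⟩
      · refine ⟨?_, ?_⟩
        · rcases List.isChain_cons.mp h.1 with ⟨h1, h2⟩
          exact List.isChain_cons.mpr ⟨fun y hy => h1 y hy, h2⟩
        · intro a ha
          rcases List.mem_cons.mp ha with rfl | ha
          · simpa [Ok] using ‹¬ (n + n' = 0)›
          · exact h.2 a (List.mem_cons_of_mem _ ha)
    · simp only [tcons]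
      split
      · exact h
      · refine ⟨List.isChain_cons_cons.mpr ⟨by simp [Alt], h.1⟩, ?_⟩
        intro a ha
        rcases List.mem_cons.mp ha with rfl | ha
        · simpa [Ok] using ‹n ≠ 0›
        · exact h.2 a ha

theorem red_scons {k : ℕ} {l : List (Letter k)} (h : Red l) (m : ZMod k) : Red (scons m l) := by
  rcases l with _ | ⟨a, r⟩
  · simp only [scons]
    split
    · exact red_nil
    · exact ⟨List.isChain_singleton _, by simpa [Ok] using ‹m ≠ 0›⟩
  · rcases a with n' | m'
    · simp only [scons]
      split
      · exact h
      · refine ⟨List.isChain_cons_cons.mpr ⟨by simp [Alt], h.1⟩, ?_⟩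
        intro a ha
        rcases List.mem_cons.mp ha with rfl | ha
        · simpa [Ok] using ‹m ≠ 0›
        · exact h.2 a ha
    · simp only [scons]
      split
      · exact ⟨h.1.tail, fun a ha => h.2 a (List.mem_cons_of_mem _ ha)⟩
      · refine ⟨?_, ?_⟩
        · rcases List.isChain_cons.mp h.1 with ⟨h1, h2⟩
          exact List.isChain_cons.mpr ⟨fun y hy => h1 y hy, h2⟩
        · intro a ha
          rcases List.mem_cons.mp ha with rfl | ha
          · simpa [Ok] using ‹¬ (m + m' = 0)›
          · exact h.2 a (List.mem_cons_of_mem _ ha)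

theorem tcons_tcons {k : ℕ} {l : List (Letter k)} (h : Red l) (a b : ℤ) :
    tcons a (tcons b l) = tcons (a + b) l := by
  rcases l with _ | ⟨x, r⟩
  · by_cases hb : b = 0
    · subst hb; simp [tcons]
    · by_cases hab : a + b = 0 <;> simp [tcons, hb, hab]
  · rcases x with n' | m'
    · by_cases hbn : b + n' = 0
      · have hr : ∀ y ∈ r.head?, ∃ m : ZMod k, y = .inr m := by
          intro y hy
          have := List.isChain_cons.mp h.1 |>.1 y hy
          rcases y with n'' | m''
          · simp [Alt] at this
          · exact ⟨m'', rfl⟩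
        have habn : a + b + n' = a := by omega
        rcases r with _ | ⟨y, r'⟩
        · by_cases ha : a = 0 <;> simp [tcons, ha, habn, hbn]
        · rcases hr y rfl with ⟨m, rfl⟩
          by_cases ha : a = 0 <;> simp [tcons, ha, habn, hbn]
      · by_cases haa : a + (b + n') = 0
        · have h2 : a + b + n' = 0 := by omega
          simp [tcons, hbn, haa, h2]
        · have h2 : ¬ (a + b + n' = 0) := by omega
          have h3 : a + (b + n') = a + b + n' := by omega
          simp [tcons, hbn, haa, h2, h3]
    · by_cases hb : b = 0
      · subst hb
        by_cases ha : a = 0 <;> simp [tcons, ha]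
      · by_cases hab : a + b = 0 <;> simp [tcons, hb, hab]

theorem scons_scons {k : ℕ} {l : List (Letter k)} (h : Red l) (a b : ZMod k) :
    scons a (scons b l) = scons (a + b) l := by
  rcases l with _ | ⟨x, r⟩
  · by_cases hb : b = 0
    · subst hb; simp [scons]
    · by_cases hab : a + b = 0 <;> simp [scons, hb, hab]
  · rcases x with n' | m'
    · by_cases hb : b = 0
      · subst hb
        by_cases ha : a = 0 <;> simp [scons, ha]
      · by_cases hab : a + b = 0 <;> simp [scons, hb, hab]
    · by_cases hbn : b + m' = 0
      · have hr : ∀ y ∈ r.head?, ∃ m : ℤ, y = .inl m := by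
          intro y hy
          have := List.isChain_cons.mp h.1 |>.1 y hy
          rcases y with n'' | m''
          · exact ⟨n'', rfl⟩
          · simp [Alt] at this
        have habn : a + b + m' = a := by linear_combination hbn
        rcases r with _ | ⟨y, r'⟩
        · by_cases ha : a = 0 <;> simp [scons, ha, habn, hbn]
        · rcases hr y rfl with ⟨m, rfl⟩
          by_cases ha : a = 0 <;> simp [scons, ha, habn, hbn]
      · by_cases haa : a + (b + m') = 0
        · have h2 : a + b + m' = 0 := by linear_combination haa
          simp [scons, hbn, haa, h2]
        · have h2 : ¬ (a + b + m') = 0 := by rw [add_assoc]; exact haa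
          have h3 : a + (b + m') = a + b + m' := by ring
          simp [scons, hbn, haa, h2, h3]

theorem tcons_zero {k : ℕ} {l : List (Letter k)} (h : Red l) : tcons 0 l = l := by
  rcases l with _ | ⟨x, r⟩
  · simp [tcons]
  · rcases x with n' | m'
    · have hn : ¬ (n' = 0) := by
        have := h.2 (.inl n') (by simp)
        simpa [Ok] using this
      simp [tcons, hn]
    · simp [tcons]

theorem scons_zero {k : ℕ} {l : List (Letter k)} (h : Red l) : scons 0 l = l := by
  rcases l with _ | ⟨x, r⟩
  · simp [scons]
  · rcases x with n' | m'
    · simp [scons]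
    · have hn : ¬ (m' = 0) := by
        have := h.2 (.inr m') (by simp)
        simpa [Ok] using this
      simp [scons, hn]

def tE (k : ℕ) (n : ℤ) : Equiv.Perm (W k) where
  toFun w := ⟨tcons n w.1, red_tcons w.2 n⟩
  invFun w := ⟨tcons (-n) w.1, red_tcons w.2 (-n)⟩
  left_inv w := by
    apply Subtype.ext
    simp only
    rw [tcons_tcons w.2, neg_add_cancel, tcons_zero w.2]
  right_inv w := by
    apply Subtype.ext
    simp only
    rw [tcons_tcons w.2, add_neg_cancel, tcons_zero w.2]

def sE (k : ℕ) (m : ZMod k) : Equiv.Perm (W k) where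
  toFun w := ⟨scons m w.1, red_scons w.2 m⟩
  invFun w := ⟨scons (-m) w.1, red_scons w.2 (-m)⟩
  left_inv w := by
    apply Subtype.ext
    simp only
    rw [scons_scons w.2, neg_add_cancel, scons_zero w.2]
  right_inv w := by
    apply Subtype.ext
    simp only
    rw [scons_scons w.2, add_neg_cancel, scons_zero w.2]

def T (k : ℕ) : Equiv.Perm (W k) := tE k 1
def S (k : ℕ) : Equiv.Perm (W k) := sE k 1
def Hp (k : ℕ) : Equiv.Perm (W k) := T k * (S k)⁻¹

theorem T_apply {k : ℕ} (w : W k) : (T k w).1 = tcons 1 w.1 := rfl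
theorem T_inv_apply {k : ℕ} (w : W k) : ((T k)⁻¹ w).1 = tcons (-1) w.1 := rfl
theorem S_apply {k : ℕ} (w : W k) : (S k w).1 = scons 1 w.1 := rfl
theorem S_inv_apply {k : ℕ} (w : W k) : ((S k)⁻¹ w).1 = scons (-1) w.1 := rfl
theorem Hp_apply {k : ℕ} (w : W k) : (Hp k w).1 = tcons 1 (scons (-1) w.1) := rfl

theorem S_pow_apply {k : ℕ} (n : ℕ) (w : W k) : (((S k) ^ n) w).1 = scons (n : ZMod k) w.1 := by
  induction n with
  | zero => simp [scons_zero w.2]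
  | succ n ih =>
    rw [pow_succ', Equiv.Perm.mul_apply]
    have : ((S k) (((S k) ^ n) w)).1 = scons 1 (scons (n : ZMod k) w.1) := by
      rw [S_apply, ih]
    rw [this, scons_scons w.2]
    congr 1
    push_cast
    ring

theorem S_pow_k {k : ℕ} : (S k) ^ k = 1 := by
  apply Equiv.ext
  intro w
  apply Subtype.ext
  rw [S_pow_apply, ZMod.natCast_self, scons_zero w.2]
  rfl

theorem S_pow_inv_apply {k : ℕ} (n : ℕ) (w : W k) :
    (((S k) ^ n)⁻¹ w).1 = scons (-(n : ZMod k)) w.1 := by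
  have : ((S k) ^ n) ⟨scons (-(n : ZMod k)) w.1, red_scons w.2 _⟩ = w := by
    apply Subtype.ext
    erw [S_pow_apply]
    simp only
    rw [scons_scons w.2, add_neg_cancel, scons_zero w.2]
  conv_lhs => erw [← this, Equiv.Perm.inv_def, Equiv.symm_apply_apply]

section Phi

variable (k : ℕ)

def gg : Gk k := PresentedGroup.of true
def hh : Gk k := PresentedGroup.of false
def ss : Gk k := (hh k)⁻¹ * gg k

theorem ss_pow_k : (ss k) ^ k = 1 := by
  have hmem : ((FreeGroup.of false)⁻¹ * FreeGroup.of true) ^ k ∈ sierpRels k := rfl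
  have h1 : ((ss k) ^ k : Gk k) =
      PresentedGroup.mk (sierpRels k) (((FreeGroup.of false)⁻¹ * FreeGroup.of true) ^ k) := by
    rw [map_pow, map_mul, map_inv]
    rfl
  rw [h1]
  have : ((FreeGroup.of false)⁻¹ * FreeGroup.of true) ^ k ∈
      Subgroup.normalClosure (sierpRels k) := Subgroup.subset_normalClosure hmem
  exact (QuotientGroup.eq_one_iff _).mpr this

def phi : Gk k →* Equiv.Perm (W k) :=
  PresentedGroup.toGroup (f := fun b => if b then T k else Hp k) (by
    rintro r hr
    rcases hr with rfl
    rw [map_pow, map_mul, map_inv]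
    simp only [FreeGroup.lift_apply_of]
    show ((Hp k)⁻¹ * T k) ^ k = 1
    rw [Hp, mul_inv_rev, inv_inv, inv_mul_cancel_right]
    exact S_pow_k)

theorem phi_g : phi k (gg k) = T k := PresentedGroup.toGroup.of _
theorem phi_h : phi k (hh k) = Hp k := PresentedGroup.toGroup.of _
theorem phi_s : phi k (ss k) = S k := by
  rw [ss, map_mul, map_inv, phi_g, phi_h, Hp, mul_inv_rev, inv_inv, inv_mul_cancel_right]

def nilW : W k := ⟨[], red_nil⟩

def nf (x : Gk k) : W k := phi k x (nilW k)

def pel : Letter k → Gk k := Sum.elim (fun n => (gg k) ^ n) (fun m => (ss k) ^ m.val)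

def piW (l : List (Letter k)) : Gk k := (l.map (pel k)).prod

theorem piW_nil : piW k [] = 1 := rfl
theorem piW_cons (a : Letter k) (l : List (Letter k)) :
    piW k (a :: l) = pel k a * piW k l := by simp [piW]

theorem spow_mod (a : ℕ) : (ss k) ^ (a % k) = (ss k) ^ a := by
  conv_rhs => rw [← Nat.div_add_mod a k]
  rw [pow_add, pow_mul, ss_pow_k, one_pow, one_mul]

theorem piW_tcons (n : ℤ) {l : List (Letter k)} (h : Red l) :
    piW k (tcons n l) = (gg k) ^ n * piW k l := by
  rcases l with _ | ⟨x, r⟩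
  · by_cases hn : n = 0 <;> simp [tcons, hn, piW_cons, pel]
  · rcases x with n' | m'
    · by_cases hnn : n + n' = 0
      · have : n' = -n := by omega
        subst this
        simp [tcons, hnn, piW_cons, pel, ← zpow_add]
      · simp only [tcons, if_neg hnn, piW_cons, pel, Sum.elim_inl, ← mul_assoc, ← zpow_add]
    · by_cases hn : n = 0 <;> simp [tcons, hn, piW_cons, pel]

theorem piW_scons (k : ℕ) [NeZero k] (m : ZMod k) {l : List (Letter k)} (h : Red l) :
    piW k (scons m l) = (ss k) ^ m.val * piW k l := by
  rcases l with _ | ⟨x, r⟩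
  · by_cases hm : m = 0 <;> simp [scons, hm, piW_cons, pel]
  · rcases x with n' | m'
    · by_cases hm : m = 0 <;> simp [scons, hm, piW_cons, pel]
    · by_cases hmm : m + m' = 0
      · have hm'ne : m' ≠ 0 := by
          have := h.2 (.inr m') (by simp)
          simpa [Ok] using this
        by_cases hm : m = 0
        · exfalso; apply hm'ne; rwa [hm, zero_add] at hmm
        · have hvv : m.val + m'.val = k := by
            have h1 : (m + m').val = 0 := by rw [hmm, ZMod.val_zero]
            have h2 : (m.val + m'.val) % k = 0 := by rw [← ZMod.val_add, h1]
            have h3 : 0 < m.val := ZMod.val_pos.mpr hm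
            have h4 : 0 < m'.val := ZMod.val_pos.mpr hm'ne
            have h5 : m.val < k := ZMod.val_lt m
            have h6 : m'.val < k := ZMod.val_lt m'
            have h7 : k ≤ m.val + m'.val :=
              Nat.le_of_dvd (by omega) (Nat.dvd_of_mod_eq_zero h2)
            have h8 : (m.val + m'.val) % k = (m.val + m'.val - k) % k :=
              Nat.mod_eq_sub_mod h7
            have h9 : (m.val + m'.val - k) % k = m.val + m'.val - k :=
              Nat.mod_eq_of_lt (by omega)
            omega
          simp only [scons, if_pos hmm, piW_cons, pel, Sum.elim_inr, ← mul_assoc, ← pow_add, hvv,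
            ss_pow_k, one_mul]
      · simp only [scons, if_neg hmm, piW_cons, pel, Sum.elim_inr, ← mul_assoc, ← pow_add]
        rw [ZMod.val_add, spow_mod]

end Phi

section Faithful

variable (k : ℕ) [NeZero k]

omit [NeZero k] in
theorem gh_eq : hh k = gg k * (ss k)⁻¹ := by
  rw [ss, mul_inv_rev, inv_inv, ← mul_assoc, mul_inv_cancel, one_mul]

theorem ss_val_neg_one : ((-1 : ZMod k)).val = k - 1 := by
  have hk1 : 1 ≤ k := Nat.one_le_iff_ne_zero.mpr (NeZero.ne k)
  have h1 : ((-1 : ZMod k)) = ((k - 1 : ℕ) : ZMod k) := by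
    push_cast [Nat.cast_sub hk1]
    rw [ZMod.natCast_self]
    ring
  rw [h1, ZMod.val_cast_of_lt (by omega)]

theorem ss_pow_val_neg_one : (ss k) ^ ((-1 : ZMod k)).val = (ss k)⁻¹ := by
  have hk1 : 1 ≤ k := Nat.one_le_iff_ne_zero.mpr (NeZero.ne k)
  apply eq_inv_of_mul_eq_one_right
  rw [ss_val_neg_one, ← pow_succ', show k - 1 + 1 = k by omega, ss_pow_k]

theorem pi_phi (x : Gk k) : ∀ w : W k, piW k (phi k x w).1 = x * piW k w.1 := by
  have hx : x ∈ Subgroup.closure (Set.range (PresentedGroup.of :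
      Bool → Gk k)) := by
    rw [PresentedGroup.closure_range_of]
    trivial
  induction hx using Subgroup.closure_induction with
  | mem y hy =>
    obtain ⟨b, rfl⟩ := hy
    intro w
    cases b
    · -- h generator
      rw [show (PresentedGroup.of false : Gk k) = hh k from rfl, phi_h]
      have h1 : (Hp k w).1 = tcons 1 (scons (-1) w.1) := rfl
      rw [h1, piW_tcons _ _ (red_scons w.2 _), piW_scons _ _ w.2]
      rw [ss_pow_val_neg_one, gh_eq]
      group
    · rw [show (PresentedGroup.of true : Gk k) = gg k from rfl, phi_g]
      rw [T_apply, piW_tcons _ _ w.2]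
      group
  | one => intro w; simp
  | mul x y hx hy ihx ihy =>
    intro w
    rw [map_mul, Equiv.Perm.mul_apply, ihx, ihy, mul_assoc]
  | inv x hx ihx =>
    intro w
    have := ihx ((phi k x⁻¹) w)
    rw [← Equiv.Perm.mul_apply, ← map_mul, mul_inv_cancel, map_one,
      Equiv.Perm.one_apply] at this
    rw [eq_inv_mul_iff_mul_eq, ← this]

theorem pi_nf (x : Gk k) : piW k (nf k x).1 = x := by
  have := pi_phi k x (nilW k)
  rwa [show piW k (nilW k).1 = 1 from rfl, mul_one] at this

theorem nf_injective : Function.Injective (nf k) := by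
  intro x y hxy
  rw [← pi_nf k x, ← pi_nf k y, hxy]

end Faithful

section Words

variable {k : ℕ}

def tvalL : List (Letter k) → ℤ
  | .inl n :: _ => n
  | _ => 0

def daux : List (Letter k) → ℤ × ZMod k
  | [] => (0, 0)
  | .inl n :: _ => (n, 0)
  | .inr m :: r => (tvalL r, m)

def dd (l : List (Letter k)) : ℤ × ZMod k := daux l.reverse

def phiW (ℓ : ℕ) (l : List (Letter k)) : Prop :=
  if 1 ≤ (dd l).1 then (dd l).2.val ≤ k - ℓ
  else (1 ≤ (dd l).2.val ∧ (dd l).2.val ≤ k - ℓ)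

theorem daux_irrel (x y : Letter k) (r r' : List (Letter k)) :
    daux (x :: y :: r) = daux (x :: y :: r') := by
  rcases x with n | m
  · rfl
  · rcases y with n' | m' <;> rfl

theorem dd_cons (a : Letter k) {l : List (Letter k)} (hl : 2 ≤ l.length) :
    dd (a :: l) = dd l := by
  rcases hrev : l.reverse with _ | ⟨x, r1⟩
  · exfalso
    have : l = [] := by simpa using congrArg List.reverse hrev
    simp [this] at hl
  · rcases r1 with _ | ⟨y, r⟩
    · exfalso
      have : l = [x] := by simpa using congrArg List.reverse hrev
      simp [this] at hl
    · have h1 : (a :: l).reverse = x :: y :: (r ++ [a]) := by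
        rw [List.reverse_cons, hrev]; rfl
      rw [dd, dd, h1, hrev, daux_irrel]

theorem phiW_congr {ℓ : ℕ} {l l' : List (Letter k)} (h : dd l = dd l') :
    phiW ℓ l ↔ phiW ℓ l' := by rw [phiW, phiW, h]

end Words

section Main

variable {k ℓ : ℕ} (hk : 2 ≤ k) (hℓ1 : 1 ≤ ℓ) (hℓk : ℓ ≤ k)

theorem val_sub_one {k : ℕ} (hk : 2 ≤ k) (m : ZMod k) (hm : m ≠ 0) :
    (m - 1).val = m.val - 1 := by
  haveI : NeZero k := ⟨by omega⟩
  have h0 : 1 ≤ m.val := ZMod.val_pos.mpr hm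
  have h1 : ((m.val : ℕ) : ZMod k) = m := ZMod.natCast_zmod_val m
  have h2 : m - 1 = ((m.val - 1 : ℕ) : ZMod k) := by
    rw [Nat.cast_sub h0, h1]; norm_num
  rw [h2, ZMod.val_cast_of_lt (by have := ZMod.val_lt m; omega)]

theorem val_one' {k : ℕ} (hk : 2 ≤ k) : (1 : ZMod k).val = 1 := by
  haveI : Fact (1 < k) := ⟨by omega⟩
  exact ZMod.val_one k

include hk in
theorem phiT {l : List (Letter k)} (h : Red l) (hne : l ≠ []) :
    phiW ℓ (tcons 1 l) ↔ phiW ℓ l := by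
  haveI : NeZero k := ⟨by omega⟩
  rcases l with _ | ⟨a, l1⟩
  · exact absurd rfl hne
  rcases a with n | m
  · -- head is t-syllable
    have hn0 : n ≠ 0 := by simpa [Ok] using h.2 (.inl n) (by simp)
    by_cases hn : (1 : ℤ) + n = 0
    · -- n = -1 : cancellation
      have hn' : n = -1 := by omega
      subst hn'
      rw [show tcons 1 (.inl (-1) :: l1) = l1 by simp [tcons]]
      rcases l1 with _ | ⟨b, l2⟩
      · simp [phiW, dd, daux, ZMod.val_zero]
      rcases b with n2 | m2
      · -- not reduced: Alt fails
        exfalso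
        have := List.isChain_cons_cons.mp h.1 |>.1
        simp [Alt] at this
      rcases l2 with _ | ⟨c, l3⟩
      · -- l = [inl -1, inr m2]
        have hm2 : m2 ≠ 0 := by simpa [Ok] using h.2 (.inr m2) (by simp)
        simp only [phiW, dd]
        norm_num [daux, tvalL]
      · -- length ≥ 3
        exact (phiW_congr (dd_cons _ (by simp))).symm
  -- no-cancellation head inl
    · rw [show tcons 1 (.inl n :: l1) = .inl (1+n) :: l1 by simp [tcons, hn]]
      rcases l1 with _ | ⟨b, l2⟩
      · simp only [phiW, dd]
        norm_num [daux, tvalL, ZMod.val_zero]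
        omega
      rcases l2 with _ | ⟨c, l3⟩
      · rcases b with n2 | m2
        · exfalso
          have := List.isChain_cons_cons.mp h.1 |>.1
          simp [Alt] at this
        · simp only [phiW, dd]
          norm_num [daux, tvalL]
          constructor <;> intro h' <;> [skip; skip] <;> split_ifs at h' ⊢ <;> omega
      · have h1 : dd (Sum.inl (1+n) :: b :: c :: l3) = dd (b :: c :: l3) :=
          dd_cons _ (by simp)
        have h2 : dd (Sum.inl n :: b :: c :: l3) = dd (b :: c :: l3) :=
          dd_cons _ (by simp)
        exact phiW_congr (h1.trans h2.symm)
  · -- head is s-syllable : prepend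
    have hm0 : m ≠ 0 := by simpa [Ok] using h.2 (.inr m) (by simp)
    rw [show tcons 1 (.inr m :: l1) = .inl 1 :: .inr m :: l1 by simp [tcons]]
    rcases l1 with _ | ⟨b, l2⟩
    · simp only [phiW, dd]
      norm_num [daux, tvalL]
      have := ZMod.val_pos.mpr hm0
      omega
    · exact phiW_congr (dd_cons _ (by simp))

end Main

section Main2

variable {k ℓ : ℕ} (hk : 2 ≤ k) (hℓ1 : 1 ≤ ℓ) (hℓk : ℓ ≤ k)

include hk hℓ1 hℓk

theorem m0_eq_zero_iff : (1 - (ℓ : ZMod k)) = 0 ↔ ℓ = 1 := by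
  haveI : NeZero k := ⟨by omega⟩
  have h1 : (1 - (ℓ : ZMod k)) = -(((ℓ - 1 : ℕ) : ZMod k)) := by
    push_cast [Nat.cast_sub hℓ1]
    ring
  rw [h1, neg_eq_zero, ZMod.natCast_eq_zero_iff]
  constructor
  · intro hdvd
    have := Nat.eq_zero_of_dvd_of_lt hdvd
    omega
  · intro h; subst h; simp

theorem m0_eq_one_iff : (1 - (ℓ : ZMod k)) = 1 ↔ ℓ = k := by
  haveI : NeZero k := ⟨by omega⟩
  rw [sub_eq_self, ZMod.natCast_eq_zero_iff]
  constructor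
  · intro hdvd
    have := Nat.le_of_dvd (by omega) hdvd
    omega
  · intro h; subst h; simp

theorem m0_val (hℓ2 : 2 ≤ ℓ) : (1 - (ℓ : ZMod k)).val = k + 1 - ℓ := by
  haveI : NeZero k := ⟨by omega⟩
  have h1 : (1 - (ℓ : ZMod k)) = ((k + 1 - ℓ : ℕ) : ZMod k) := by
    have : ((k + 1 - ℓ : ℕ) : ZMod k) = ((k + 1 : ℕ) : ZMod k) - (ℓ : ZMod k) := by
      rw [Nat.cast_sub (by omega)]
    rw [this]
    push_cast
    rw [ZMod.natCast_self]
    ring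
  rw [h1, ZMod.val_cast_of_lt (by omega)]

theorem phiH {l : List (Letter k)} (h : Red l)
    (hne : l ≠ scons (1 - (ℓ : ZMod k)) []) :
    phiW ℓ (tcons 1 (scons (-1) l)) ↔ phiW ℓ l := by
  haveI : NeZero k := ⟨by omega⟩
  haveI : Fact (1 < k) := ⟨by omega⟩
  have hone : (1 : ZMod k) ≠ 0 := one_ne_zero
  have hneg1 : (-1 : ZMod k) ≠ 0 := by simpa using hone
  rcases l with _ | ⟨a, l1⟩
  · -- l = []
    have hℓ2 : 2 ≤ ℓ := by
      rcases Nat.lt_or_ge ℓ 2 with h' | h'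
      · exfalso
        have : ℓ = 1 := by omega
        apply hne
        rw [show (1 - (ℓ : ZMod k)) = 0 from (m0_eq_zero_iff hk hℓ1 hℓk).mpr this]
        simp [scons]
      · exact h'
    rw [show scons (-1) ([] : List (Letter k)) = [.inr (-1)] by simp [scons, hneg1],
      show tcons 1 [(.inr (-1) : Letter k)] = [.inl 1, .inr (-1)] by simp [tcons]]
    simp only [phiW, dd]
    norm_num [daux, tvalL]
    rw [ss_val_neg_one]
    omega
  rcases a with n | m
  · -- head inl : pure prepends
    rw [show scons (-1) (.inl n :: l1) = .inr (-1) :: .inl n :: l1 by simp [scons, hneg1],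
      show tcons 1 (.inr (-1) :: .inl n :: l1 : List (Letter k)) =
        .inl 1 :: .inr (-1) :: .inl n :: l1 by simp [tcons]]
    have h1 : dd (.inl 1 :: .inr (-1) :: .inl n :: l1 : List (Letter k)) =
        dd (.inr (-1) :: .inl n :: l1) := dd_cons _ (by simp)
    rcases l1 with _ | ⟨b, l2⟩
    · apply phiW_congr
      rw [h1]; rfl
    · apply phiW_congr
      rw [h1, dd_cons _ (by simp)]
  · -- head inr m
    have hm0 : m ≠ 0 := by simpa [Ok] using h.2 (.inr m) (by simp)
    by_cases hm1 : m = 1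
    · subst hm1
      rw [show scons (-1) (.inr 1 :: l1 : List (Letter k)) = l1 by simp [scons]]
      rcases l1 with _ | ⟨b, l2⟩
      · -- l = [inr 1]
        have hℓk' : ℓ ≠ k := by
          intro h'
          apply hne
          rw [show (1 - (ℓ : ZMod k)) = 1 from (m0_eq_one_iff hk hℓ1 hℓk).mpr h']
          simp [scons, hone]
        rw [show tcons 1 ([] : List (Letter k)) = [.inl 1] by simp [tcons]]
        simp only [phiW, dd]
        norm_num [daux, tvalL]
        rw [val_one' hk]
        omega
      rcases b with n2 | m2
      swap
      · exfalso
        have := List.isChain_cons_cons.mp h.1 |>.1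
        simp [Alt] at this
      have hred2 : Red (Sum.inl n2 :: l2 : List (Letter k)) :=
        ⟨h.1.tail, fun x hx => h.2 x (List.mem_cons_of_mem _ hx)⟩
      have hn2 : n2 ≠ 0 := by simpa [Ok] using h.2 (.inl n2) (by simp)
      by_cases hn2' : (1 : ℤ) + n2 = 0
      · have : n2 = -1 := by omega
        subst this
        rw [show tcons 1 (.inl (-1) :: l2 : List (Letter k)) = l2 by simp [tcons]]
        rcases l2 with _ | ⟨c, l3⟩
        · simp [phiW, dd, daux, tvalL, ZMod.val_zero]
        rcases c with n3 | m3
        · exfalso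
          have := List.isChain_cons_cons.mp hred2.1 |>.1
          simp [Alt] at this
        rcases l3 with _ | ⟨d, l4⟩
        · simp only [phiW, dd]
          norm_num [daux, tvalL]
        · apply phiW_congr
          rw [show dd ((.inr 1 : Letter k) :: .inl (-1) :: .inr m3 :: d :: l4) =
              dd (.inl (-1) :: .inr m3 :: d :: l4) from dd_cons _ (by simp),
            show dd ((.inl (-1) : Letter k) :: .inr m3 :: d :: l4) =
              dd (.inr m3 :: d :: l4) from dd_cons _ (by simp)]
      · rw [show tcons 1 (.inl n2 :: l2 : List (Letter k)) = .inl (1 + n2) :: l2 by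
          simp [tcons, hn2']]
        rcases l2 with _ | ⟨c, l3⟩
        · simp only [phiW, dd]
          norm_num [daux, tvalL]
          first
          | omega
          | (split_ifs <;> omega)
        rcases c with n3 | m3
        · exfalso
          have := List.isChain_cons_cons.mp hred2.1 |>.1
          simp [Alt] at this
        rcases l3 with _ | ⟨d, l4⟩
        · simp only [phiW, dd]
          norm_num [daux, tvalL]
          first
          | omega
          | (split_ifs <;> omega)
          | (constructor <;> (intro h'' <;> split_ifs at h'' ⊢ <;> omega))
        · apply phiW_congr
          rw [show dd ((.inl (1 + n2) : Letter k) :: .inr m3 :: d :: l4) =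
              dd (.inr m3 :: d :: l4) from dd_cons _ (by simp),
            show dd ((.inr 1 : Letter k) :: .inl n2 :: .inr m3 :: d :: l4) =
              dd (.inl n2 :: .inr m3 :: d :: l4) from dd_cons _ (by simp),
            show dd ((.inl n2 : Letter k) :: .inr m3 :: d :: l4) =
              dd (.inr m3 :: d :: l4) from dd_cons _ (by simp)]
    · -- m ≠ 1
      have hmm : (-1 : ZMod k) + m ≠ 0 := by
        intro h'
        apply hm1
        linear_combination h'
      rw [show scons (-1) (.inr m :: l1 : List (Letter k)) = .inr (-1 + m) :: l1 by
        simp [scons, hmm]]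
      rcases l1 with _ | ⟨b, l2⟩
      · -- l = [inr m], m ≠ 0, 1
        have hmne : m ≠ 1 - (ℓ : ZMod k) := by
          intro h'
          apply hne
          rw [← h']
          simp [scons, hm0]
        rw [show tcons 1 [(.inr (-1 + m) : Letter k)] = [.inl 1, .inr (-1 + m)] by
          simp [tcons]]
        simp only [phiW, dd]
        norm_num [daux, tvalL]
        rw [show (-1 + m : ZMod k) = m - 1 by ring, val_sub_one hk m hm0]
        have hv1 : 1 ≤ m.val := ZMod.val_pos.mpr hm0
        have hv2 : m.val < k := ZMod.val_lt m
        by_cases hℓ2 : 2 ≤ ℓ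
        · have hvne : m.val ≠ k + 1 - ℓ := by
            intro h'
            apply hmne
            rw [← ZMod.natCast_zmod_val m, h', ← m0_val hk hℓ1 hℓk hℓ2,
              ZMod.natCast_zmod_val]
          omega
        · have : ℓ = 1 := by omega
          omega
      · rw [show tcons 1 (.inr (-1 + m) :: b :: l2 : List (Letter k)) =
          .inl 1 :: .inr (-1 + m) :: b :: l2 by simp [tcons]]
        rcases b with n2 | m2
        swap
        · exfalso
          have := List.isChain_cons_cons.mp h.1 |>.1
          simp [Alt] at this
        rcases l2 with _ | ⟨c, l3⟩
        · apply phiW_congr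
          rw [show dd ((.inl 1 : Letter k) :: .inr (-1 + m) :: .inl n2 :: []) =
              dd (.inr (-1 + m) :: .inl n2 :: []) from dd_cons _ (by simp)]
          rfl
        · apply phiW_congr
          rw [show dd ((.inl 1 : Letter k) :: .inr (-1 + m) :: .inl n2 :: c :: l3) =
              dd (.inr (-1 + m) :: .inl n2 :: c :: l3) from dd_cons _ (by simp),
            show dd ((.inr (-1 + m) : Letter k) :: .inl n2 :: c :: l3) =
              dd (.inl n2 :: c :: l3) from dd_cons _ (by simp),
            show dd ((.inr m : Letter k) :: .inl n2 :: c :: l3) =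
              dd (.inl n2 :: c :: l3) from dd_cons _ (by simp)]

end Main2

end GkAux

/-- The left Cayley graph of G_k with respect to {g,h}, with the two edges
(g⁻¹, 1) and (g⁻¹(hg⁻¹)^{ℓ−1}, (hg⁻¹)^ℓ) cut. -/
def cutGraph (k : ℕ) (ℓ : ℕ) : SimpleGraph (Gk k) :=
  let g : Gk k := PresentedGroup.of true
  let h : Gk k := PresentedGroup.of false
  SimpleGraph.fromRel (fun x y =>
    (y = g * x ∨ y = h * x) ∧
    ¬ ({x, y} : Set (Gk k)) = {g⁻¹, 1} ∧
    ¬ ({x, y} : Set (Gk k)) = {g⁻¹ * (h * g⁻¹) ^ (ℓ - 1), (h * g⁻¹) ^ ℓ})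

/-- The subset E_ℓ: the connected component of 1 after cutting the two edges. -/
def cutComponent (k : ℕ) (ℓ : ℕ) : Set (Gk k) :=
  {y | (cutGraph k ℓ).Reachable 1 y}

namespace GkAux

section Group

variable {k ℓ : ℕ} (hk : 2 ≤ k) (hℓ1 : 1 ≤ ℓ) (hℓk : ℓ ≤ k)

theorem cutGraph_eq :
    cutGraph k ℓ = SimpleGraph.fromRel (fun x y =>
      (y = gg k * x ∨ y = hh k * x) ∧
      ¬ ({x, y} : Set (Gk k)) = {(gg k)⁻¹, 1} ∧
      ¬ ({x, y} : Set (Gk k)) =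
        {(gg k)⁻¹ * (hh k * (gg k)⁻¹) ^ (ℓ - 1), (hh k * (gg k)⁻¹) ^ ℓ}) := rfl

theorem hg_conj : hh k * (gg k)⁻¹ = gg k * (ss k)⁻¹ * (gg k)⁻¹ := by
  rw [ss]; group

theorem c_eq : (gg k)⁻¹ * (hh k * (gg k)⁻¹) ^ (ℓ - 1) =
    ((ss k)⁻¹) ^ (ℓ - 1) * (gg k)⁻¹ := by
  rw [hg_conj, conj_pow]; group

theorem b_eq : (hh k * (gg k)⁻¹) ^ ℓ = gg k * ((ss k)⁻¹) ^ ℓ * (gg k)⁻¹ := by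
  rw [hg_conj, conj_pow]

include hℓ1 in
theorem hb_eq : hh k * ((gg k)⁻¹ * (hh k * (gg k)⁻¹) ^ (ℓ - 1)) =
    (hh k * (gg k)⁻¹) ^ ℓ := by
  rw [← mul_assoc, ← pow_succ', show ℓ - 1 + 1 = ℓ by omega]

theorem phi_s_inv_pow (n : ℕ) (w : W k) :
    (phi k (((ss k)⁻¹) ^ n) w).1 = scons (-(n : ZMod k)) w.1 := by
  rw [map_pow, map_inv, phi_s, inv_pow, S_pow_inv_apply]

theorem nf_one : nf k 1 = nilW k := by rw [nf, map_one]; rfl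

theorem nf_mul_g (x : Gk k) : (nf k (gg k * x)).1 = tcons 1 (nf k x).1 := by
  rw [nf, map_mul, phi_g, Equiv.Perm.mul_apply]; rfl

theorem nf_mul_h (x : Gk k) : (nf k (hh k * x)).1 = tcons 1 (scons (-1) (nf k x).1) := by
  rw [nf, map_mul, phi_h, Equiv.Perm.mul_apply]; rfl

theorem nf_g_val : (nf k (gg k)).1 = [.inl 1] := by
  have := nf_mul_g (k := k) 1
  rwa [mul_one, nf_one, show tcons 1 (nilW k).1 = [.inl 1] by simp [tcons, nilW]] at this

theorem nf_ginv_val : (nf k ((gg k)⁻¹)).1 = [.inl (-1)] := by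
  rw [nf, map_inv, phi_g]
  show tcons (-1) [] = _
  simp [tcons]

include hk in
theorem nf_h_val : (nf k (hh k)).1 = [.inl 1, .inr (-1)] := by
  haveI : NeZero k := ⟨by omega⟩
  have := nf_mul_h (k := k) 1
  rw [mul_one, nf_one] at this
  rw [this]
  show tcons 1 (scons (-1) []) = _
  have hne : (-1 : ZMod k) ≠ 0 := by
    intro h'
    have := ss_val_neg_one (k := k)
    rw [h', ZMod.val_zero] at this
    omega
  simp [scons, tcons, hne]

include hk hℓ1 in
theorem nf_c_val : (nf k ((gg k)⁻¹ * (hh k * (gg k)⁻¹) ^ (ℓ - 1))).1 =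
    scons (1 - (ℓ : ZMod k)) [.inl (-1)] := by
  rw [c_eq, nf, map_mul, Equiv.Perm.mul_apply]
  have h1 : (phi k ((gg k)⁻¹) (nilW k)) = ⟨[.inl (-1)], by
      exact ⟨List.isChain_singleton _, by simp [Ok]⟩⟩ := by
    apply Subtype.ext
    rw [map_inv, phi_g]
    show tcons (-1) [] = _
    simp [tcons]
  rw [h1]
  erw [phi_s_inv_pow]
  congr 1
  push_cast [Nat.cast_sub hℓ1]
  ring

include hk hℓ1 hℓk in
theorem nf_b_val (hne : ℓ ≠ k) : (nf k ((hh k * (gg k)⁻¹) ^ ℓ)).1 =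
    [.inl 1, .inr (-(ℓ : ZMod k)), .inl (-1)] := by
  haveI : NeZero k := ⟨by omega⟩
  have hℓ0 : ((ℓ : ZMod k)) ≠ 0 := by
    rw [Ne, ZMod.natCast_eq_zero_iff]
    intro hdvd
    have := Nat.le_of_dvd (by omega) hdvd
    omega
  have hnℓ0 : (-(ℓ : ZMod k)) ≠ 0 := by simpa using hℓ0
  have redl : Red ([.inl (-1)] : List (Letter k)) :=
    ⟨List.isChain_singleton _, by simp [Ok]⟩
  have h1 : phi k ((gg k)⁻¹) (nilW k) = ⟨[.inl (-1)], redl⟩ := by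
    apply Subtype.ext
    rw [map_inv, phi_g]
    show tcons (-1) [] = _
    simp [tcons]
  rw [b_eq, nf, map_mul, map_mul, Equiv.Perm.mul_apply, Equiv.Perm.mul_apply, h1, phi_g,
    T_apply]
  erw [phi_s_inv_pow]
  simp [scons, tcons, hnℓ0]

end Group

end GkAux

namespace GkAux

section Group2

variable {k ℓ : ℕ} (hk : 2 ≤ k) (hℓ1 : 1 ≤ ℓ) (hℓk : ℓ ≤ k)

def Phix (k ℓ : ℕ) (x : Gk k) : Prop := phiW ℓ (nf k (x * gg k)).1

include hk hℓ1 in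
theorem nf_cg_val : (nf k (((gg k)⁻¹ * (hh k * (gg k)⁻¹) ^ (ℓ - 1)) * gg k)).1 =
    scons (1 - (ℓ : ZMod k)) [] := by
  rw [c_eq, inv_mul_cancel_right, nf, phi_s_inv_pow]
  show scons _ [] = _
  congr 1
  push_cast [Nat.cast_sub hℓ1]
  ring

include hk hℓ1 hℓk

theorem core_step {x y : Gk k} (hrel : y = gg k * x ∨ y = hh k * x)
    (h1 : ¬ ({x, y} : Set (Gk k)) = {(gg k)⁻¹, 1})
    (h2 : ¬ ({x, y} : Set (Gk k)) =
      {(gg k)⁻¹ * (hh k * (gg k)⁻¹) ^ (ℓ - 1), (hh k * (gg k)⁻¹) ^ ℓ}) :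
    (Phix k ℓ x ↔ Phix k ℓ y) := by
  haveI : NeZero k := ⟨by omega⟩
  rcases hrel with rfl | rfl
  · have hyg : (nf k (gg k * x * gg k)).1 = tcons 1 (nf k (x * gg k)).1 := by
      rw [mul_assoc, nf_mul_g]
    have hne : (nf k (x * gg k)).1 ≠ [] := by
      intro h0
      have hnf : nf k (x * gg k) = nf k 1 := by rw [nf_one]; exact Subtype.ext h0
      have hx1 : x * gg k = 1 := nf_injective k hnf
      have hxg : x = (gg k)⁻¹ := eq_inv_of_mul_eq_one_left hx1
      apply h1
      rw [hxg, mul_inv_cancel]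
    rw [Phix, Phix, hyg]
    exact (phiT hk (nf k (x * gg k)).2 hne).symm
  · have hyg : (nf k (hh k * x * gg k)).1 =
        tcons 1 (scons (-1) (nf k (x * gg k)).1) := by
      rw [mul_assoc, nf_mul_h]
    have hne : (nf k (x * gg k)).1 ≠ scons (1 - (ℓ : ZMod k)) [] := by
      intro h0
      have hnf : nf k (x * gg k) =
          nf k (((gg k)⁻¹ * (hh k * (gg k)⁻¹) ^ (ℓ - 1)) * gg k) := by
        apply Subtype.ext
        rw [nf_cg_val hk hℓ1, h0]
      have hx1 := nf_injective k hnf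
      have hxc : x = (gg k)⁻¹ * (hh k * (gg k)⁻¹) ^ (ℓ - 1) := mul_right_cancel hx1
      apply h2
      rw [hxc, hb_eq hℓ1]
    rw [Phix, Phix, hyg]
    exact (phiH hk hℓ1 hℓk (nf k (x * gg k)).2 hne).symm

theorem adj_phix {x y : Gk k} (hadj : (cutGraph k ℓ).Adj x y) :
    Phix k ℓ x ↔ Phix k ℓ y := by
  rw [cutGraph_eq, SimpleGraph.fromRel_adj] at hadj
  rcases hadj.2 with ⟨hrel, h1, h2⟩ | ⟨hrel, h1, h2⟩
  · exact core_step hk hℓ1 hℓk hrel h1 h2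
  · exact (core_step hk hℓ1 hℓk hrel h1 h2).symm

theorem reach_phix {x y : Gk k} (hr : (cutGraph k ℓ).Reachable x y) :
    Phix k ℓ x ↔ Phix k ℓ y := by
  obtain ⟨p⟩ := hr
  induction p with
  | nil => exact Iff.rfl
  | cons ha _ ih => exact (adj_phix hk hℓ1 hℓk ha).trans ih

theorem phix_one : Phix k ℓ 1 := by
  haveI : NeZero k := ⟨by omega⟩
  rw [Phix, one_mul, nf_g_val]
  simp [phiW, dd, daux, tvalL, ZMod.val_zero]

theorem phix_c_false : ¬ Phix k ℓ ((gg k)⁻¹ * (hh k * (gg k)⁻¹) ^ (ℓ - 1)) := by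
  haveI : NeZero k := ⟨by omega⟩
  rw [Phix, nf_cg_val hk hℓ1]
  by_cases hℓ : ℓ = 1
  · have h0 : (1 - (ℓ : ZMod k)) = 0 := (m0_eq_zero_iff hk hℓ1 hℓk).mpr hℓ
    rw [h0]
    simp [scons, phiW, dd, daux, ZMod.val_zero]
  · have h0 : (1 - (ℓ : ZMod k)) ≠ 0 := fun h' => hℓ ((m0_eq_zero_iff hk hℓ1 hℓk).mp h')
    rw [show scons (1 - (ℓ : ZMod k)) ([] : List (Letter k)) = [.inr (1 - (ℓ : ZMod k))] by
      simp [scons, h0]]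
    simp only [phiW, dd]
    norm_num [daux, tvalL]
    rw [m0_val hk hℓ1 hℓk (by omega)]
    omega

theorem c_not_mem : ((gg k)⁻¹ * (hh k * (gg k)⁻¹) ^ (ℓ - 1)) ∉ cutComponent k ℓ := by
  intro hmem
  exact phix_c_false hk hℓ1 hℓk
    ((reach_phix hk hℓ1 hℓk hmem).mp (phix_one hk hℓ1 hℓk))

theorem h_ne_one : hh k ≠ 1 := by
  intro h'
  have := congrArg (fun z => (nf k z).1) h'
  simp only [nf_h_val hk, nf_one] at this
  simp [nilW] at this

theorem h_ne_g : hh k ≠ gg k := by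
  intro h'
  have := congrArg (fun z => (nf k z).1) h'
  simp only [nf_h_val hk, nf_g_val] at this
  simp at this

theorem h_ne_ginv : hh k ≠ (gg k)⁻¹ := by
  intro h'
  have := congrArg (fun z => (nf k z).1) h'
  simp only [nf_h_val hk, nf_ginv_val] at this
  simp at this

theorem b_one_iff : ((hh k * (gg k)⁻¹) ^ ℓ = 1) ↔ ℓ = k := by
  constructor
  · intro h1
    by_contra hne
    have := congrArg (fun z => (nf k z).1) h1
    simp only [nf_b_val hk hℓ1 hℓk hne, nf_one] at this
    simp [nilW] at this
  · intro h'
    subst h'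
    rw [b_eq, inv_pow, ss_pow_k]
    simp

theorem hb_ne_c : hh k * (hh k * (gg k)⁻¹) ^ ℓ ≠
    (gg k)⁻¹ * (hh k * (gg k)⁻¹) ^ (ℓ - 1) := by
  haveI : NeZero k := ⟨by omega⟩
  intro h'
  have hval := congrArg (fun z => (nf k z).1) h'
  rw [nf_c_val hk hℓ1] at hval
  by_cases hc : ℓ = k
  · have hb1 : (hh k * (gg k)⁻¹) ^ ℓ = 1 := (b_one_iff hk hℓ1 hℓk).mpr hc
    rw [hb1, mul_one, nf_h_val hk] at hval
    have h0 : (1 - (ℓ : ZMod k)) ≠ 0 := by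
      intro hz
      have := (m0_eq_zero_iff hk hℓ1 hℓk).mp hz
      omega
    rw [show scons (1 - (ℓ : ZMod k)) ([.inl (-1)] : List (Letter k)) =
        [.inr (1 - (ℓ : ZMod k)), .inl (-1)] by simp [scons, h0]] at hval
    simp at hval
  · have hm1 : (-1 : ZMod k) ≠ 0 := by
      intro hz
      have := ss_val_neg_one (k := k)
      rw [hz, ZMod.val_zero] at this
      omega
    rw [nf_mul_h, nf_b_val hk hℓ1 hℓk hc] at hval
    rw [show scons (-1) ([.inl 1, .inr (-(ℓ : ZMod k)), .inl (-1)] : List (Letter k)) =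
        [.inr (-1), .inl 1, .inr (-(ℓ : ZMod k)), .inl (-1)] by simp [scons, hm1]] at hval
    rw [show tcons 1 ([.inr (-1), .inl 1, .inr (-(ℓ : ZMod k)), .inl (-1)] :
        List (Letter k)) =
        [.inl 1, .inr (-1), .inl 1, .inr (-(ℓ : ZMod k)), .inl (-1)] by simp [tcons]] at hval
    by_cases hℓ' : (1 - (ℓ : ZMod k)) = 0
    · rw [hℓ', show scons (0 : ZMod k) ([.inl (-1)] : List (Letter k)) = [.inl (-1)] by
        simp [scons]] at hval
      simp at hval
    · rw [show scons (1 - (ℓ : ZMod k)) ([.inl (-1)] : List (Letter k)) =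
          [.inr (1 - (ℓ : ZMod k)), .inl (-1)] by simp [scons, hℓ']] at hval
      simp at hval

end Group2

end GkAux

theorem Gk_cut_subsets (k : ℕ) (hk : 2 ≤ k) (ℓ : ℕ) (hℓ1 : 1 ≤ ℓ) (hℓk : ℓ ≤ k) :
    (PresentedGroup.of false * ·) '' cutComponent k ℓ =
      cutComponent k ℓ \
        {(PresentedGroup.of false * (PresentedGroup.of true : Gk k)⁻¹) ^ ℓ} ∧
    ((PresentedGroup.of false * (PresentedGroup.of true : Gk k)⁻¹) ^ ℓ = 1 ↔
      ℓ = k) := by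
  have hOf : (PresentedGroup.of false : Gk k) = GkAux.hh k := rfl
  have hOg : (PresentedGroup.of true : Gk k) = GkAux.gg k := rfl
  rw [hOf, hOg]
  constructor
  · ext y
    simp only [Set.mem_image, Set.mem_diff, Set.mem_singleton_iff]
    constructor
    · rintro ⟨x, hx, rfl⟩
      have hadj : (cutGraph k ℓ).Adj x (GkAux.hh k * x) := by
        rw [GkAux.cutGraph_eq, SimpleGraph.fromRel_adj]
        refine ⟨?_, Or.inl ⟨Or.inr rfl, ?_, ?_⟩⟩
        · intro heq
          exact GkAux.h_ne_one hk hℓ1 hℓk (right_eq_mul.mp heq)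
        · intro hpair
          rcases Set.pair_eq_pair_iff.mp hpair with ⟨hx1, hy1⟩ | ⟨hx1, hy1⟩
          · rw [hx1] at hy1
            apply GkAux.h_ne_g hk hℓ1 hℓk
            have := mul_eq_one_iff_eq_inv.mp hy1
            rwa [inv_inv] at this
          · rw [hx1, mul_one] at hy1
            exact GkAux.h_ne_ginv hk hℓ1 hℓk hy1
        · intro hpair
          rcases Set.pair_eq_pair_iff.mp hpair with ⟨hx1, hy1⟩ | ⟨hx1, hy1⟩
          · rw [hx1] at hx
            exact GkAux.c_not_mem hk hℓ1 hℓk hx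
          · rw [hx1] at hy1
            exact GkAux.hb_ne_c hk hℓ1 hℓk hy1
      refine ⟨hx.trans hadj.reachable, ?_⟩
      intro heq
      have hxc : x = (GkAux.gg k)⁻¹ * (GkAux.hh k * (GkAux.gg k)⁻¹) ^ (ℓ - 1) := by
        have := GkAux.hb_eq (k := k) hℓ1
        rw [← this] at heq
        exact mul_left_cancel heq
      rw [hxc] at hx
      exact GkAux.c_not_mem hk hℓ1 hℓk hx
    · rintro ⟨hyE, hyb⟩
      refine ⟨(GkAux.hh k)⁻¹ * y, ?_, by rw [← mul_assoc, mul_inv_cancel, one_mul]⟩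
      have hadj : (cutGraph k ℓ).Adj y ((GkAux.hh k)⁻¹ * y) := by
        rw [GkAux.cutGraph_eq, SimpleGraph.fromRel_adj]
        refine ⟨?_, Or.inr ⟨Or.inr (by rw [← mul_assoc, mul_inv_cancel, one_mul]), ?_, ?_⟩⟩
        · intro heq
          apply GkAux.h_ne_one hk hℓ1 hℓk
          have : (GkAux.hh k)⁻¹ = 1 := right_eq_mul.mp heq
          simpa using congrArg (·⁻¹) this
        · intro hpair
          rcases Set.pair_eq_pair_iff.mp hpair with ⟨hx1, hy1⟩ | ⟨hx1, hy1⟩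
          · rw [hy1, mul_one] at hx1
            apply GkAux.h_ne_g hk hℓ1 hℓk
            have := congrArg (·⁻¹) hx1
            simpa using this
          · apply GkAux.h_ne_ginv hk hℓ1 hℓk
            rw [← hy1]
            have : y = GkAux.hh k := by
              have := congrArg (GkAux.hh k * ·) hx1
              simpa [← mul_assoc] using this
            rw [this]
        · intro hpair
          rcases Set.pair_eq_pair_iff.mp hpair with ⟨hx1, hy1⟩ | ⟨hx1, hy1⟩
          · exact hyb hy1
          · rw [hy1] at hyE
            exact GkAux.c_not_mem hk hℓ1 hℓk hyE
      exact hyE.trans hadj.reachable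
  · exact GkAux.b_one_iff hk hℓ1 hℓk
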